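/- Let X be a pre-Riesz space and let P : X → X be a linear projection (P ∘ P = P). Then the following assertions are equivalent: (i) P is a band projection; (ii) ker P = (PX)^⊥; (iii) PX = (ker P)^⊥; (iv) every element of PX is disjoint to every element of ker P; (v) both P and I − P are positive operators. -/

import Mathlib

open Pointwise

/-- The ordered-scalar-multiplication class of the older Mathlib (removed since). -/
class OrderedSMul (R M : Type*) [Semiring R] [PartialOrder R] [AddCommMonoid M] [PartialOrder M]
    [SMulWithZero R M] : Prop where
  protected smul_lt_smul_of_pos : ∀ {a b : M}, ∀ {c : R}, a < b → 0 < c → c • a < c • b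
  protected lt_of_smul_lt_smul_of_pos : ∀ {a b : M}, ∀ {c : R}, c • a < c • b → 0 < c → a < b

variable {X : Type*} [AddCommGroup X] [PartialOrder X] [IsOrderedAddMonoid X] [Module ℝ X] [OrderedSMul ℝ X]

/-- Two elements of an ordered vector space are disjoint if the sets `{x+y, -x-y}` and
`{x-y, y-x}` have the same set of upper bounds. -/
def UDisjoint (x y : X) : Prop :=
  upperBounds ({x + y, -x - y} : Set X) = upperBounds ({x - y, y - x} : Set X)

/-- The disjoint complement `S^⊥` of a set `S`. -/
def dComp (S : Set X) : Set X := {x : X | ∀ s ∈ S, UDisjoint x s}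

/-- A band: a set equal to its double disjoint complement. -/
def IsBand (B : Set X) : Prop := B = dComp (dComp B)

/-- A projection band: a band `B` with `B ∩ B^⊥ = {0}` and `B + B^⊥ = X`. -/
def IsProjBand (B : Set X) : Prop :=
  IsBand B ∧ B ∩ dComp B = {0} ∧ ∀ x : X, ∃ b ∈ B, ∃ c ∈ dComp B, x = b + c

/-- A positive linear operator. -/
def IsPosMap (T : X →ₗ[ℝ] X) : Prop := ∀ x : X, 0 ≤ x → 0 ≤ T x

/-- A band projection: a linear projection whose range is a projection band and whose
kernel is the disjoint complement of the range. -/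
def IsBandProj (P : X →ₗ[ℝ] X) : Prop :=
  P ∘ₗ P = P ∧ IsProjBand (Set.range ⇑P) ∧ (LinearMap.ker P : Set X) = dComp (Set.range ⇑P)

/-- A pre-Riesz space: for every nonempty finite `A ⊆ X` and every `x`, if the upper bounds
of `x + A` are contained in the upper bounds of `A`, then `x ≥ 0`. -/
def IsPreRiesz (X : Type*) [AddCommGroup X] [PartialOrder X] [IsOrderedAddMonoid X] [Module ℝ X] [OrderedSMul ℝ X] : Prop :=
  ∀ (A : Set X) (x : X), A.Finite → A.Nonempty →
    upperBounds ((x + ·) '' A) ⊆ upperBounds A → 0 ≤ x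

set_option linter.unusedSectionVars false

/-- `UBB c u` means `u` is an upper bound of `{c, -c}`. -/
private def UBB (c u : X) : Prop := c ≤ u ∧ -c ≤ u

private lemma mem_ub_pair {p q u : X} :
    u ∈ upperBounds ({p, q} : Set X) ↔ p ≤ u ∧ q ≤ u := by
  constructor
  · intro h; exact ⟨h (by simp), h (by simp)⟩
  · rintro ⟨h1, h2⟩ v hv
    simp only [Set.mem_insert_iff, Set.mem_singleton_iff] at hv
    rcases hv with rfl | rfl <;> assumption

private lemma mem_ub_triple {p q r u : X} :
    u ∈ upperBounds ({p, q, r} : Set X) ↔ p ≤ u ∧ q ≤ u ∧ r ≤ u := by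
  constructor
  · intro h; exact ⟨h (by simp), h (by simp), h (by simp)⟩
  · rintro ⟨h1, h2, h3⟩ v hv
    simp only [Set.mem_insert_iff, Set.mem_singleton_iff] at hv
    rcases hv with rfl | rfl | rfl <;> assumption

private lemma ubb_neg {c u : X} : UBB (-c) u ↔ UBB c u := by
  unfold UBB; rw [neg_neg]; exact and_comm

private lemma udisjoint_iff' (x y : X) :
    UDisjoint x y ↔ ∀ u : X, UBB (x + y) u ↔ UBB (x - y) u := by
  unfold UDisjoint
  rw [show -x - y = -(x + y) by abel, show y - x = -(x - y) by abel, Set.ext_iff]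
  exact forall_congr' fun u => by rw [mem_ub_pair, mem_ub_pair]; exact Iff.rfl

private lemma udisjoint_symm {x y : X} (h : UDisjoint x y) : UDisjoint y x := by
  rw [udisjoint_iff'] at h ⊢
  intro u
  rw [show y + x = x + y by abel, show y - x = -(x - y) by abel, ubb_neg]
  exact h u

private lemma udisjoint_neg {x y : X} (h : UDisjoint x y) : UDisjoint (-x) y := by
  rw [udisjoint_iff'] at h ⊢
  intro u
  rw [show -x + y = -(x - y) by abel, show -x - y = -(x + y) by abel, ubb_neg, ubb_neg]
  exact (h u).symm

/-- In a pre-Riesz space, `w ≥ b` and `w ≥ -b` imply `w ≥ 0`. -/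
private lemma nonneg_of_ub (hX : IsPreRiesz X) {w b : X} (h1 : b ≤ w) (h2 : -b ≤ w) : 0 ≤ w := by
  apply hX {b, -b, 0} w (Set.Finite.insert _ (Set.Finite.insert _ (Set.finite_singleton _)))
    ⟨b, by simp⟩
  intro t ht
  simp only [Set.image_insert_eq, Set.image_singleton, mem_ub_triple] at ht
  obtain ⟨hb, hnb, hw⟩ := ht
  rw [add_zero] at hw
  rw [mem_ub_triple]
  refine ⟨le_trans h1 hw, le_trans h2 hw, ?_⟩
  calc (0 : X) = -b + b := by abel
    _ ≤ w + b := add_le_add_left h2 b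
    _ ≤ t := hb

private lemma ub_center (hX : IsPreRiesz X) {u c d : X} (h1 : c + d ≤ u) (h2 : c - d ≤ u) :
    c ≤ u := by
  have h1' : d ≤ u - c := by rw [le_sub_iff_add_le, add_comm]; exact h1
  have h2' : -d ≤ u - c := by rw [le_sub_iff_add_le, show -d + c = c - d by abel]; exact h2
  exact sub_nonneg.mp (nonneg_of_ub hX h1' h2')

private lemma ubb_split (hX : IsPreRiesz X) {x y u : X} (h1 : UBB (x + y) u) (h2 : UBB (x - y) u) :
    UBB x u ∧ UBB y u := by
  obtain ⟨a1, a2⟩ := h1; obtain ⟨b1, b2⟩ := h2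
  refine ⟨⟨ub_center hX (c := x) (d := y) a1 b1, ?_⟩, ?_, ?_⟩
  · refine ub_center hX (c := -x) (d := y) ?_ ?_
    · rw [show -x + y = -(x - y) by abel]; exact b2
    · rw [show -x - y = -(x + y) by abel]; exact a2
  · refine ub_center hX (c := y) (d := x) ?_ ?_
    · rw [show y + x = x + y by abel]; exact a1
    · rw [show y - x = -(x - y) by abel]; exact b2
  · refine ub_center hX (c := -y) (d := x) ?_ ?_
    · rw [show -y + x = x - y by abel]; exact b1
    · rw [show -y - x = -(x + y) by abel]; exact a2

/-- If `a ⊥ b` and `a + b ≥ 0` then `b ≥ 0`. -/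
private lemma disj_nonneg_right (hX : IsPreRiesz X) {a b : X} (hd : UDisjoint a b)
    (hab : 0 ≤ a + b) : 0 ≤ b := by
  rw [udisjoint_iff'] at hd
  apply hX {a + b, 0} b (Set.Finite.insert _ (Set.finite_singleton _)) ⟨a + b, by simp⟩
  intro u hu
  simp only [Set.image_insert_eq, Set.image_singleton, mem_ub_pair] at hu
  obtain ⟨h1, h2⟩ := hu
  rw [add_zero] at h2
  have t1 : a + b ≤ u - b := by
    rw [le_sub_iff_add_le, show a + b + b = b + (a + b) by abel]; exact h1
  have t2 : -(a + b) ≤ u - b := le_trans (neg_nonpos.mpr hab) (le_trans hab t1)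
  have hub : UBB (a - b) (u - b) := (hd (u - b)).mp ⟨t1, t2⟩
  have split := ubb_split hX (x := a) (y := b) ⟨t1, t2⟩ hub
  rw [mem_ub_pair]
  constructor
  · exact le_sub_iff_add_le.mp split.1.1
  · have := le_sub_iff_add_le.mp split.2.2
    rwa [neg_add_cancel] at this

private lemma pos_disj_aux (P : X →ₗ[ℝ] X)
    (hp : ∀ x : X, 0 ≤ x → 0 ≤ P x) (hq : ∀ x : X, 0 ≤ x → 0 ≤ x - P x)
    {x y u : X} (hx : P x = x) (hy : P y = 0) (h : UBB (x + y) u) : UBB (x - y) u := by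
  obtain ⟨h1, h2⟩ := h
  have s1 : 0 ≤ u - (x + y) := sub_nonneg.mpr h1
  have s2 : 0 ≤ u + (x + y) := by
    have := sub_nonneg.mpr h2; rwa [sub_neg_eq_add] at this
  have p1 : 0 ≤ P u - x := by
    have := hp _ s1
    rwa [map_sub, map_add, hx, hy, add_zero] at this
  have q1 : 0 ≤ (u - (x + y)) - (P u - x) := by
    have := hq _ s1
    rwa [map_sub, map_add, hx, hy, add_zero] at this
  have p2 : 0 ≤ P u + x := by
    have := hp _ s2
    rwa [map_add, map_add, hx, hy, add_zero] at this
  have q2 : 0 ≤ (u + (x + y)) - (P u + x) := by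
    have := hq _ s2
    rwa [map_add, map_add, hx, hy, add_zero] at this
  constructor
  · rw [← sub_nonneg]
    have := add_nonneg p1 q2
    rwa [show (P u - x) + ((u + (x + y)) - (P u + x)) = u - (x - y) by abel] at this
  · rw [← sub_nonneg, sub_neg_eq_add]
    have := add_nonneg p2 q1
    rwa [show (P u + x) + ((u - (x + y)) - (P u - x)) = u + (x - y) by abel] at this

private lemma pos_disj (P : X →ₗ[ℝ] X)
    (hp : ∀ x : X, 0 ≤ x → 0 ≤ P x) (hq : ∀ x : X, 0 ≤ x → 0 ≤ x - P x)
    {x y : X} (hx : P x = x) (hy : P y = 0) : UDisjoint x y := by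
  rw [udisjoint_iff']
  intro u
  constructor
  · exact pos_disj_aux P hp hq hx hy
  · intro h
    have hy' : P (-y) = 0 := by rw [map_neg, hy, neg_zero]
    have h' : UBB (x + -y) u := by rwa [← sub_eq_add_neg]
    have := pos_disj_aux P hp hq hx hy' h'
    rwa [sub_neg_eq_add] at this

/-- Key lemma: if `P` and `I - P` are positive and `z ⊥ P z`, then `P z ≤ 0`. -/
private lemma key_ker (hX : IsPreRiesz X) (P : X →ₗ[ℝ] X) (hidem : ∀ x : X, P (P x) = P x)
    (hp : ∀ x : X, 0 ≤ x → 0 ≤ P x) (hq : ∀ x : X, 0 ≤ x → 0 ≤ x - P x)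
    {z : X} (hd : UDisjoint z (P z)) : P z ≤ 0 := by
  rw [udisjoint_iff'] at hd
  have h0 : 0 ≤ -(P z) := by
    apply hX {z + P z, -(z + P z)} (-(P z)) (Set.Finite.insert _ (Set.finite_singleton _))
      ⟨z + P z, by simp⟩
    intro u hu
    simp only [Set.image_insert_eq, Set.image_singleton, mem_ub_pair] at hu
    obtain ⟨hu1, hu2⟩ := hu
    have h1 : z ≤ u := by rwa [show -(P z) + (z + P z) = z by abel] at hu1
    have h2 : 0 ≤ u + (z + P z + P z) := by
      rw [show -(P z) + -(z + P z) = -(z + P z + P z) by abel] at hu2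
      have := sub_nonneg.mpr hu2; rwa [sub_neg_eq_add] at this
    have e1 : 0 ≤ P u - P z := by
      have := hp _ (sub_nonneg.mpr h1); rwa [map_sub] at this
    have e2 : 0 ≤ (u - z) - (P u - P z) := by
      have := hq _ (sub_nonneg.mpr h1); rwa [map_sub] at this
    have e3 : 0 ≤ P u + (P z + P z + P z) := by
      have := hp _ h2
      rwa [map_add, map_add, map_add, hidem] at this
    have e4 : 0 ≤ (u + (z + P z + P z)) - (P u + (P z + P z + P z)) := by
      have := hq _ h2
      rwa [map_add, map_add, map_add, hidem] at this
    have m1 : 0 ≤ P u + P z := by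
      refine nonneg_of_ub hX (b := P z + P z) ?_ ?_
      · exact add_le_add_left (sub_nonneg.mp e1) (P z)
      · rw [← sub_nonneg, sub_neg_eq_add,
          show P u + P z + (P z + P z) = P u + (P z + P z + P z) by abel]
        exact e3
    have m2 : 0 ≤ P u := by
      refine nonneg_of_ub hX (b := P z) (sub_nonneg.mp e1) ?_
      rw [← sub_nonneg, sub_neg_eq_add]; exact m1
    have d1 : z - P z ≤ u - P u := by
      rw [← sub_nonneg, show (u - P u) - (z - P z) = (u - z) - (P u - P z) by abel]
      exact e2
    have d2 : -(z - P z) ≤ u - P u := by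
      rw [← sub_nonneg, sub_neg_eq_add,
        show (u - P u) + (z - P z) = (u + (z + P z + P z)) - (P u + (P z + P z + P z)) by abel]
      exact e4
    have hub : UBB (z + P z) (u - P u) := (hd (u - P u)).mpr ⟨d1, d2⟩
    rw [mem_ub_pair]
    exact ⟨le_trans hub.1 (sub_le_self u m2), le_trans hub.2 (sub_le_self u m2)⟩
  exact neg_nonneg.mp h0

private lemma ker_eq (hX : IsPreRiesz X) (P : X →ₗ[ℝ] X) (hidem : ∀ x : X, P (P x) = P x)
    (hp : ∀ x : X, 0 ≤ x → 0 ≤ P x) (hq : ∀ x : X, 0 ≤ x → 0 ≤ x - P x) :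
    (LinearMap.ker P : Set X) = {x : X | ∀ s ∈ Set.range ⇑P, UDisjoint x s} := by
  ext z
  simp only [SetLike.mem_coe, LinearMap.mem_ker, Set.mem_setOf_eq]
  constructor
  · rintro hz s ⟨a, rfl⟩
    exact udisjoint_symm (pos_disj P hp hq (hidem a) hz)
  · intro hz
    have hd : UDisjoint z (P z) := hz (P z) ⟨z, rfl⟩
    have hd' : UDisjoint (-z) (P (-z)) := by
      rw [map_neg]
      exact udisjoint_neg (udisjoint_symm (udisjoint_neg (udisjoint_symm hd)))
    have l1 := key_ker hX P hidem hp hq hd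
    have l2 := key_ker hX P hidem hp hq hd'
    rw [map_neg, neg_nonpos] at l2
    exact le_antisymm l1 l2

private lemma dComp_eq (S : Set X) : dComp S = {x : X | ∀ s ∈ S, UDisjoint x s} := rfl

private lemma range_eq (hX : IsPreRiesz X) (P : X →ₗ[ℝ] X) (hidem : ∀ x : X, P (P x) = P x)
    (hp : ∀ x : X, 0 ≤ x → 0 ≤ P x) (hq : ∀ x : X, 0 ≤ x → 0 ≤ x - P x) :
    Set.range ⇑P = dComp (LinearMap.ker P : Set X) := by
  set Q : X →ₗ[ℝ] X := LinearMap.id - P with hQ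
  have hQapp : ∀ x : X, Q x = x - P x := fun x => rfl
  have hQidem : ∀ x : X, Q (Q x) = Q x := by
    intro x
    rw [hQapp, hQapp, map_sub, hidem]
    abel
  have hQp : ∀ x : X, 0 ≤ x → 0 ≤ Q x := fun x hx => by rw [hQapp]; exact hq x hx
  have hQq : ∀ x : X, 0 ≤ x → 0 ≤ x - Q x := fun x hx => by
    rw [hQapp, sub_sub_cancel]; exact hp x hx
  have h := ker_eq hX Q hQidem hQp hQq
  have hker : (LinearMap.ker Q : Set X) = Set.range ⇑P := by
    ext x
    simp only [SetLike.mem_coe, LinearMap.mem_ker, Set.mem_range, hQapp, sub_eq_zero]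
    constructor
    · intro hx; exact ⟨x, hx.symm⟩
    · rintro ⟨a, rfl⟩; exact (hidem a).symm
  have hrange : Set.range ⇑Q = (LinearMap.ker P : Set X) := by
    ext x
    simp only [Set.mem_range, SetLike.mem_coe, LinearMap.mem_ker, hQapp]
    constructor
    · rintro ⟨a, rfl⟩; rw [map_sub, hidem, sub_self]
    · intro hx; exact ⟨x, by rw [hx, sub_zero]⟩
  rw [hker, hrange] at h
  rw [h, dComp_eq]

/-- Characterisations of band projections among linear projections. -/
theorem stmt_3 (hX : IsPreRiesz X) (P : X →ₗ[ℝ] X) (hP : P ∘ₗ P = P) :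
    [IsBandProj P,
     (LinearMap.ker P : Set X) = dComp (Set.range ⇑P),
     Set.range ⇑P = dComp (LinearMap.ker P : Set X),
     ∀ x ∈ Set.range ⇑P, ∀ y ∈ (LinearMap.ker P : Set X), UDisjoint x y,
     IsPosMap P ∧ IsPosMap ((LinearMap.id : X →ₗ[ℝ] X) - P)].TFAE := by
  have hidem : ∀ x : X, P (P x) = P x := fun x => by
    have := LinearMap.congr_fun hP x
    simpa using this
  have hker_of5 : (IsPosMap P ∧ IsPosMap ((LinearMap.id : X →ₗ[ℝ] X) - P)) →
      (LinearMap.ker P : Set X) = dComp (Set.range ⇑P) := by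
    intro h5
    rw [dComp_eq]
    exact ker_eq hX P hidem (fun x hx => h5.1 x hx) (fun x hx => h5.2 x hx)
  have hrange_of5 : (IsPosMap P ∧ IsPosMap ((LinearMap.id : X →ₗ[ℝ] X) - P)) →
      Set.range ⇑P = dComp (LinearMap.ker P : Set X) := by
    intro h5
    exact range_eq hX P hidem (fun x hx => h5.1 x hx) (fun x hx => h5.2 x hx)
  tfae_have 1 → 2 := fun h => h.2.2
  tfae_have 2 → 4 := by
    intro h2 x hx y hy
    rw [h2] at hy
    exact udisjoint_symm (hy x hx)
  tfae_have 3 → 4 := by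
    intro h3 x hx y hy
    rw [h3] at hx
    exact hx y hy
  tfae_have 4 → 5 := by
    intro h4
    have hb : ∀ x : X, x - P x ∈ LinearMap.ker P := fun x => by
      rw [LinearMap.mem_ker, map_sub, hidem, sub_self]
    have hd : ∀ x : X, UDisjoint (P x) (x - P x) := fun x => h4 (P x) ⟨x, rfl⟩ (x - P x) (hb x)
    constructor
    · intro x hx
      exact disj_nonneg_right hX (udisjoint_symm (hd x))
        (by rw [show x - P x + P x = x by abel]; exact hx)
    · intro x hx
      show 0 ≤ x - P x
      exact disj_nonneg_right hX (hd x) (by rw [show P x + (x - P x) = x by abel]; exact hx)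
  tfae_have 5 → 2 := hker_of5
  tfae_have 5 → 3 := hrange_of5
  tfae_have 5 → 1 := by
    intro h5
    have h2 := hker_of5 h5
    have h3 := hrange_of5 h5
    refine ⟨hP, ⟨?_, ?_, ?_⟩, h2⟩
    · show Set.range ⇑P = dComp (dComp (Set.range ⇑P))
      rw [← h2]
      exact h3
    · rw [← h2]
      ext x
      simp only [Set.mem_inter_iff, Set.mem_range, SetLike.mem_coe, LinearMap.mem_ker,
        Set.mem_singleton_iff]
      constructor
      · rintro ⟨⟨a, rfl⟩, h0⟩
        calc P a = P (P a) := (hidem a).symm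
          _ = 0 := h0
      · rintro rfl
        exact ⟨⟨0, map_zero P⟩, map_zero P⟩
    · intro x
      refine ⟨P x, ⟨x, rfl⟩, x - P x, ?_, by abel⟩
      rw [← h2]
      show x - P x ∈ LinearMap.ker P
      rw [LinearMap.mem_ker, map_sub, hidem, sub_self]
  tfae_finish
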